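/- With R_a = [[A,B],[C,D]] ∈ M(2m,ℂ) and W = [[1ₘ,1ₘ],[w·1ₘ,-w·1ₘ]], w = √z, one has det(R_a + W·diag(e^{cw},e^{-cw})·W⁻¹) = e^{mcw}·det_{ℂᵐ}([W⁻¹R_aW]₂₂) + O(w^{m+1}·e^{(m-1)cw}) as w → ∞ along the positive real axis, where [W⁻¹R_aW]₂₂ = -(w/2)B + (A+D)/2 - (1/(2w))C and c > 0. -/

import Mathlib

open Asymptotics Filter

lemma norm_det_le_prod {n : Type*} [Fintype n] [DecidableEq n] (M : Matrix n n ℂ) (r : n → ℝ)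
    (h : ∀ i j, ‖M i j‖ ≤ r i) :
    ‖M.det‖ ≤ (Fintype.card n).factorial * ∏ i, r i := by
  rw [Matrix.det_apply]
  calc ‖∑ σ : Equiv.Perm n, Equiv.Perm.sign σ • ∏ i, M (σ i) i‖
      ≤ ∑ σ : Equiv.Perm n, ‖Equiv.Perm.sign σ • ∏ i, M (σ i) i‖ := norm_sum_le _ _
    _ ≤ ∑ _σ : Equiv.Perm n, ∏ i, r i := by
        refine Finset.sum_le_sum fun σ _ => ?_
        have hn : ‖Equiv.Perm.sign σ • ∏ i, M (σ i) i‖ = ‖∏ i, M (σ i) i‖ := by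
          rcases Int.units_eq_one_or (Equiv.Perm.sign σ) with h1 | h1 <;>
            simp [h1, Units.smul_def]
        rw [hn]
        calc ‖∏ i, M (σ i) i‖ = ∏ i, ‖M (σ i) i‖ := norm_prod _ _
          _ ≤ ∏ i, r (σ i) :=
              Finset.prod_le_prod (fun i _ => norm_nonneg _) (fun i _ => h _ _)
          _ = ∏ i, r i := Equiv.prod_comp σ r
    _ = (Fintype.card n).factorial * ∏ i, r i := by
        rw [Finset.sum_const, Finset.card_univ, Fintype.card_perm, nsmul_eq_mul]

lemma det_add_sub_det_le {n : Type*} [Fintype n] [DecidableEq n] (P E : Matrix n n ℂ)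
    (r s : n → ℝ) (hP : ∀ i j, ‖P i j‖ ≤ r i) (hE : ∀ i j, ‖E i j‖ ≤ s i)
    (β : ℝ) (hβ0 : 0 ≤ β)
    (hβ : ∀ S : Finset n, S.Nonempty →
      ((Fintype.card n).factorial : ℝ) * ∏ i, (if i ∈ S then s i else r i) ≤ β) :
    ‖(P + E).det - P.det‖ ≤ 2 ^ Fintype.card n * β := by
  have expand : (P + E).det = ∑ S : Finset n, Matrix.det (Matrix.of (S.piecewise E P)) := by
    have h1 : (P + E : Matrix n n ℂ) = (E + P : n → n → ℂ) := by
      ext i j; simp [Matrix.add_apply]; ring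
    rw [h1]
    exact Matrix.detRowAlternating.toMultilinearMap.map_add_univ E P
  have hempty : (Matrix.of ((∅ : Finset n).piecewise E P)) = P :=
    Finset.piecewise_empty E P
  have hsplit : (P + E).det - P.det
      = ∑ S ∈ (Finset.univ : Finset (Finset n)).erase ∅, Matrix.det (Matrix.of (S.piecewise E P)) := by
    rw [expand, ← Finset.add_sum_erase _ _ (Finset.mem_univ (∅ : Finset n)), hempty]
    ring
  rw [hsplit]
  calc ‖∑ S ∈ (Finset.univ : Finset (Finset n)).erase ∅, Matrix.det (Matrix.of (S.piecewise E P))‖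
      ≤ ∑ S ∈ (Finset.univ : Finset (Finset n)).erase ∅, ‖Matrix.det (Matrix.of (S.piecewise E P))‖ :=
        norm_sum_le _ _
    _ ≤ ∑ _S ∈ (Finset.univ : Finset (Finset n)).erase ∅, β := by
        refine Finset.sum_le_sum fun S hS => ?_
        have hSne : S.Nonempty := by
          rw [Finset.mem_erase] at hS
          exact Finset.nonempty_iff_ne_empty.2 hS.1
        refine le_trans (norm_det_le_prod _ (fun i => if i ∈ S then s i else r i) ?_) (hβ S hSne)
        intro i j
        by_cases hi : i ∈ S <;> simp [Matrix.of_apply, Finset.piecewise, hi] <;> [exact hE i j; exact hP i j]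
    _ ≤ 2 ^ Fintype.card n * β := by
        rw [Finset.sum_const, nsmul_eq_mul]
        refine mul_le_mul_of_nonneg_right ?_ hβ0
        calc (((Finset.univ : Finset (Finset n)).erase ∅).card : ℝ)
            ≤ ((Finset.univ : Finset (Finset n)).card : ℝ) := by
              exact_mod_cast Finset.card_le_card (Finset.erase_subset _ _)
          _ = 2 ^ Fintype.card n := by
              rw [Finset.card_univ, Fintype.card_finset]; norm_cast

set_option maxHeartbeats 1000000 in
theorem stmt3 (m : ℕ) (c : ℝ) (hc : 0 < c)
    (A B C D : Matrix (Fin m) (Fin m) ℂ) :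
    (fun w : ℝ =>
        Matrix.det
          (Matrix.fromBlocks A B C D +
            Matrix.fromBlocks (1 : Matrix (Fin m) (Fin m) ℂ) 1 ((w : ℂ) • 1) ((-(w : ℂ)) • 1) *
              Matrix.fromBlocks
                (Complex.exp (c * w) • (1 : Matrix (Fin m) (Fin m) ℂ)) 0 0
                (Complex.exp (-(c * w)) • (1 : Matrix (Fin m) (Fin m) ℂ)) *
              (Matrix.fromBlocks (1 : Matrix (Fin m) (Fin m) ℂ) 1 ((w : ℂ) • 1) ((-(w : ℂ)) • 1))⁻¹)
        - Complex.exp (m * c * w) *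
            Matrix.det
              ((-(w / 2 : ℂ)) • B + ((1 : ℂ) / 2) • (A + D) - (1 / (2 * (w : ℂ))) • C))
      =O[atTop] fun w : ℝ => w ^ (m + 1) * Real.exp (((m : ℝ) - 1) * c * w) := by
  classical
  obtain ⟨K, hKdef⟩ : ∃ K : ℝ, K = 1 + ∑ i, ∑ j, (‖A i j‖ + ‖B i j‖ + ‖C i j‖ + ‖D i j‖) :=
    ⟨_, rfl⟩
  have hsum_nonneg : (0:ℝ) ≤ ∑ i, ∑ j, (‖A i j‖ + ‖B i j‖ + ‖C i j‖ + ‖D i j‖) :=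
    Finset.sum_nonneg fun i _ => Finset.sum_nonneg fun j _ => by positivity
  have hK1 : (1:ℝ) ≤ K := by rw [hKdef]; linarith
  have hK0 : (0:ℝ) ≤ K := by linarith
  have hentry : ∀ i j, ‖A i j‖ ≤ K ∧ ‖B i j‖ ≤ K ∧ ‖C i j‖ ≤ K ∧ ‖D i j‖ ≤ K := by
    intro i j
    have h1 : ‖A i j‖ + ‖B i j‖ + ‖C i j‖ + ‖D i j‖
        ≤ ∑ i, ∑ j, (‖A i j‖ + ‖B i j‖ + ‖C i j‖ + ‖D i j‖) := by
      have h2 : ‖A i j‖ + ‖B i j‖ + ‖C i j‖ + ‖D i j‖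
          ≤ ∑ j', (‖A i j'‖ + ‖B i j'‖ + ‖C i j'‖ + ‖D i j'‖) :=
        Finset.single_le_sum (f := fun j' => ‖A i j'‖ + ‖B i j'‖ + ‖C i j'‖ + ‖D i j'‖)
          (fun j' _ => by positivity) (Finset.mem_univ j)
      exact h2.trans (Finset.single_le_sum
        (f := fun i' => ∑ j', (‖A i' j'‖ + ‖B i' j'‖ + ‖C i' j'‖ + ‖D i' j'‖))
        (fun i' _ => Finset.sum_nonneg fun j' _ => by positivity) (Finset.mem_univ i))
    refine ⟨?_, ?_, ?_, ?_⟩ <;>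
      · have := norm_nonneg (A i j); have := norm_nonneg (B i j)
        have := norm_nonneg (C i j); have := norm_nonneg (D i j)
        rw [hKdef]; linarith
  -- smallness of w * exp (-(c*w))
  have htend : Tendsto (fun w : ℝ => w * Real.exp (-(c * w))) atTop (nhds 0) := by
    have h1 := Real.tendsto_pow_mul_exp_neg_atTop_nhds_zero 1
    have h2 : Tendsto (fun w : ℝ => c * w) atTop atTop :=
      Tendsto.const_mul_atTop hc tendsto_id
    have h3 : Tendsto (fun w : ℝ => (c * w) ^ 1 * Real.exp (-(c * w))) atTop (nhds 0) :=
      h1.comp h2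
    have h4 : Tendsto (fun w : ℝ => c⁻¹ * ((c * w) ^ 1 * Real.exp (-(c * w)))) atTop (nhds 0) := by
      simpa using h3.const_mul c⁻¹
    refine h4.congr fun w => ?_
    field_simp
  have hsmall_ev : ∀ᶠ w : ℝ in atTop, 4 * K * w * Real.exp (-(c * w)) ≤ 1 := by
    have h3 : Tendsto (fun w : ℝ => 4 * K * w * Real.exp (-(c * w))) atTop (nhds 0) := by
      have := htend.const_mul (4 * K)
      simpa [mul_assoc] using this
    exact (h3.eventually_le_const (by norm_num : (0:ℝ) < 1))
  rw [isBigO_iff]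
  refine ⟨2 ^ (m + m) * (m + m).factorial * (4 * K) ^ (m + 1), ?_⟩
  filter_upwards [eventually_ge_atTop (1:ℝ), hsmall_ev] with w hw1 hsmall
  have hw0 : (0:ℝ) < w := lt_of_lt_of_le one_pos hw1
  have hωne : (w:ℂ) ≠ 0 := Complex.ofReal_ne_zero.2 hw0.ne'
  set e : ℂ := Complex.exp ((c:ℂ) * (w:ℂ)) with he
  set e' : ℂ := Complex.exp (-((c:ℂ) * (w:ℂ))) with he'
  have he0 : e ≠ 0 := Complex.exp_ne_zero _
  have hee' : e * e' = 1 := by rw [he, he', ← Complex.exp_add]; simp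
  have he'inv : e' = e⁻¹ := eq_inv_of_mul_eq_one_left (by rw [mul_comm]; exact hee')
  set Wm : Matrix (Fin m ⊕ Fin m) (Fin m ⊕ Fin m) ℂ :=
    Matrix.fromBlocks 1 1 ((w:ℂ) • 1) ((-(w:ℂ)) • 1) with hWm
  set Dg : Matrix (Fin m ⊕ Fin m) (Fin m ⊕ Fin m) ℂ :=
    Matrix.fromBlocks (e • (1 : Matrix (Fin m) (Fin m) ℂ)) 0 0 (e' • 1) with hDg
  obtain ⟨Vm, hVm⟩ : ∃ Vm : Matrix (Fin m ⊕ Fin m) (Fin m ⊕ Fin m) ℂ,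
      Vm = Matrix.fromBlocks ((1/2 : ℂ) • (1 : Matrix (Fin m) (Fin m) ℂ)) ((1/(2*(w:ℂ))) • 1)
        ((1/2 : ℂ) • 1) ((-(1/(2*(w:ℂ)))) • 1) := ⟨_, rfl⟩
  have hWV : Wm * Vm = 1 := by
    rw [hWm, hVm, Matrix.fromBlocks_multiply, ← Matrix.fromBlocks_one, Matrix.fromBlocks_inj]
    refine ⟨?_, ?_, ?_, ?_⟩ <;>
      · simp only [Matrix.smul_mul, Matrix.mul_smul, Matrix.one_mul, Matrix.mul_one, smul_smul]
        match_scalars <;> field_simp <;> try ring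
  have hVW : Vm * Wm = 1 := by
    rw [hWm, hVm, Matrix.fromBlocks_multiply, ← Matrix.fromBlocks_one, Matrix.fromBlocks_inj]
    refine ⟨?_, ?_, ?_, ?_⟩ <;>
      · simp only [Matrix.smul_mul, Matrix.mul_smul, Matrix.one_mul, Matrix.mul_one, smul_smul]
        match_scalars <;> field_simp <;> try ring
  have hWinv : Wm⁻¹ = Vm := Matrix.inv_eq_right_inv hWV
  obtain ⟨N11, hN11⟩ : ∃ X, X = (1/2:ℂ)•A + ((w:ℂ)/2)•B + (1/(2*(w:ℂ)))•C + (1/2:ℂ)•D := ⟨_, rfl⟩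
  obtain ⟨N12, hN12⟩ : ∃ X, X = (1/2:ℂ)•A + (-((w:ℂ)/2))•B + (1/(2*(w:ℂ)))•C + (-(1/2):ℂ)•D := ⟨_, rfl⟩
  obtain ⟨N21, hN21⟩ : ∃ X, X = (1/2:ℂ)•A + ((w:ℂ)/2)•B + (-(1/(2*(w:ℂ))))•C + (-(1/2):ℂ)•D := ⟨_, rfl⟩
  obtain ⟨N22, hN22⟩ : ∃ X, X = (1/2:ℂ)•A + (-((w:ℂ)/2))•B + (-(1/(2*(w:ℂ))))•C + (1/2:ℂ)•D := ⟨_, rfl⟩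
  obtain ⟨Nm, hNm⟩ : ∃ X : Matrix (Fin m ⊕ Fin m) (Fin m ⊕ Fin m) ℂ, X = Matrix.fromBlocks N11 N12 N21 N22 := ⟨_, rfl⟩
  have hN : Vm * Matrix.fromBlocks A B C D * Wm = Nm := by
    rw [hVm, hWm, hNm, hN11, hN12, hN21, hN22, Matrix.fromBlocks_multiply,
      Matrix.fromBlocks_multiply, Matrix.fromBlocks_inj]
    refine ⟨?_, ?_, ?_, ?_⟩ <;>
      · simp only [Matrix.smul_mul, Matrix.mul_smul, Matrix.one_mul, Matrix.mul_one, smul_smul]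
        match_scalars <;> field_simp <;> try ring
  have hR : Matrix.fromBlocks A B C D = Wm * Nm * Vm := by
    rw [← hN]
    have assoc : Wm * (Vm * Matrix.fromBlocks A B C D * Wm) * Vm
        = (Wm * Vm) * Matrix.fromBlocks A B C D * (Wm * Vm) := by noncomm_ring
    rw [assoc, hWV, one_mul, mul_one]
  have hbigmat : Matrix.fromBlocks A B C D + Wm * Dg * Wm⁻¹ = Wm * (Nm + Dg) * Vm := by
    rw [hWinv, mul_add, add_mul, ← hR]
  have hdetWV : Wm.det * Vm.det = 1 := by rw [← Matrix.det_mul, hWV, Matrix.det_one]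
  have hdetbig : (Matrix.fromBlocks A B C D + Wm * Dg * Wm⁻¹).det = (Nm + Dg).det := by
    rw [hbigmat, Matrix.det_mul, Matrix.det_mul]
    calc Wm.det * (Nm + Dg).det * Vm.det = (Nm + Dg).det * (Wm.det * Vm.det) := by ring
      _ = (Nm + Dg).det := by rw [hdetWV, mul_one]
  obtain ⟨P, hPdef⟩ : ∃ X : Matrix (Fin m ⊕ Fin m) (Fin m ⊕ Fin m) ℂ,
      X = Matrix.fromBlocks (1 : Matrix (Fin m) (Fin m) ℂ) 0 N21 N22 := ⟨_, rfl⟩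
  obtain ⟨Em, hEdef⟩ : ∃ X : Matrix (Fin m ⊕ Fin m) (Fin m ⊕ Fin m) ℂ,
      X = Matrix.fromBlocks (e' • N11) (e' • N12) 0 (e' • (1 : Matrix (Fin m) (Fin m) ℂ)) := ⟨_, rfl⟩
  have hfac : Nm + Dg
      = Matrix.fromBlocks (e • (1 : Matrix (Fin m) (Fin m) ℂ)) 0 0 1 * (P + Em) := by
    rw [hPdef, hEdef, hNm, hDg, Matrix.fromBlocks_add, Matrix.fromBlocks_add,
      Matrix.fromBlocks_multiply, Matrix.fromBlocks_inj]
    refine ⟨?_, ?_, ?_, ?_⟩ <;>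
      (simp only [Matrix.smul_mul, Matrix.mul_smul, Matrix.one_mul, Matrix.mul_one,
          Matrix.zero_mul, Matrix.mul_zero, add_zero, zero_add, smul_add, smul_smul];
        try (match_scalars <;> field_simp [he'inv] <;> try ring))
    all_goals linear_combination -hee'
  have hdetfac : (Nm + Dg).det = e ^ m * (P + Em).det := by
    rw [hfac, Matrix.det_mul, Matrix.det_fromBlocks_zero₂₁, Matrix.det_one, mul_one,
      Matrix.det_smul, Matrix.det_one, mul_one, Fintype.card_fin]
  have hdetP : P.det = N22.det := by
    rw [hPdef, Matrix.det_fromBlocks_zero₁₂, Matrix.det_one, one_mul]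
  have hS22 : ((-((w:ℂ) / 2)) • B + ((1:ℂ) / 2) • (A + D) - (1 / (2 * (w:ℂ))) • C) = N22 := by
    rw [hN22]; module
  have hfm : Complex.exp ((m:ℂ) * (c:ℂ) * (w:ℂ)) = e ^ m := by
    rw [he, mul_assoc, Complex.exp_nat_mul]
  -- entry bound helper
  have hblockbound : ∀ (α β γ δ : ℂ), ‖α‖ ≤ 1 → ‖β‖ ≤ w → ‖γ‖ ≤ 1 → ‖δ‖ ≤ 1 →
      ∀ i j, ‖(α•A + β•B + γ•C + δ•D) i j‖ ≤ 4*K*w := by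
    intro α β γ δ hα hβ hγ hδ i j
    obtain ⟨hA, hB, hC, hD⟩ := hentry i j
    have expand : (α•A + β•B + γ•C + δ•D) i j = α*A i j + β*B i j + γ*C i j + δ*D i j := by
      simp [Matrix.add_apply, Matrix.smul_apply, smul_eq_mul]
    rw [expand]
    have h1 : ‖α*A i j + β*B i j + γ*C i j + δ*D i j‖
        ≤ ‖α‖*‖A i j‖ + ‖β‖*‖B i j‖ + ‖γ‖*‖C i j‖ + ‖δ‖*‖D i j‖ := by
      calc ‖α*A i j + β*B i j + γ*C i j + δ*D i j‖
          ≤ ‖α*A i j + β*B i j + γ*C i j‖ + ‖δ*D i j‖ := norm_add_le _ _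
        _ ≤ ‖α*A i j + β*B i j‖ + ‖γ*C i j‖ + ‖δ*D i j‖ :=
            add_le_add_left (norm_add_le _ _) _
        _ ≤ ‖α*A i j‖ + ‖β*B i j‖ + ‖γ*C i j‖ + ‖δ*D i j‖ :=
            add_le_add_left (add_le_add_left (norm_add_le _ _) _) _
        _ = ‖α‖*‖A i j‖ + ‖β‖*‖B i j‖ + ‖γ‖*‖C i j‖ + ‖δ‖*‖D i j‖ := by
            simp [norm_mul]
    have hα0 := norm_nonneg α; have hβ0 := norm_nonneg β
    have hγ0 := norm_nonneg γ; have hδ0 := norm_nonneg δ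
    have hA0 := norm_nonneg (A i j); have hB0 := norm_nonneg (B i j)
    have hC0 := norm_nonneg (C i j); have hD0 := norm_nonneg (D i j)
    nlinarith [mul_le_mul hα hA hA0 zero_le_one, mul_le_mul hβ hB hB0 (le_of_lt hw0),
      mul_le_mul hγ hC hC0 zero_le_one, mul_le_mul hδ hD hD0 zero_le_one,
      mul_nonneg hK0 (sub_nonneg.2 hw1)]
  have hhalf : ‖(1/2:ℂ)‖ ≤ 1 := by
    rw [norm_div, norm_one]
    simp only [Complex.norm_ofNat]
    norm_num
  have hhalf' : ‖(-(1/2):ℂ)‖ ≤ 1 := by rw [norm_neg]; exact hhalf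
  have hwhalf : ‖((w:ℂ)/2)‖ ≤ w := by
    rw [norm_div, Complex.norm_real, Real.norm_eq_abs, abs_of_pos hw0]
    simp only [Complex.norm_ofNat]
    linarith
  have hwhalf' : ‖(-((w:ℂ)/2))‖ ≤ w := by rw [norm_neg]; exact hwhalf
  have hinv2w : ‖(1/(2*(w:ℂ)))‖ ≤ 1 := by
    rw [norm_div, norm_one, norm_mul, Complex.norm_real, Real.norm_eq_abs, abs_of_pos hw0]
    simp only [Complex.norm_ofNat]
    rw [div_le_one (by linarith)]
    linarith
  have hinv2w' : ‖(-(1/(2*(w:ℂ))))‖ ≤ 1 := by rw [norm_neg]; exact hinv2w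
  have hbndN11 : ∀ i j, ‖N11 i j‖ ≤ 4*K*w := by
    rw [hN11]; exact hblockbound _ _ _ _ hhalf hwhalf hinv2w hhalf
  have hbndN12 : ∀ i j, ‖N12 i j‖ ≤ 4*K*w := by
    rw [hN12]; exact hblockbound _ _ _ _ hhalf hwhalf' hinv2w hhalf'
  have hbndN21 : ∀ i j, ‖N21 i j‖ ≤ 4*K*w := by
    rw [hN21]; exact hblockbound _ _ _ _ hhalf hwhalf hinv2w' hhalf'
  have hbndN22 : ∀ i j, ‖N22 i j‖ ≤ 4*K*w := by
    rw [hN22]; exact hblockbound _ _ _ _ hhalf hwhalf' hinv2w' hhalf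
  have h4Kw1 : (1:ℝ) ≤ 4*K*w := by nlinarith
  have h4Kw0 : (0:ℝ) ≤ 4*K*w := by nlinarith
  have h4Kwe0 : (0:ℝ) ≤ 4*K*w*Real.exp (-(c*w)) :=
    mul_nonneg h4Kw0 (Real.exp_pos _).le
  have he'norm : ‖e'‖ = Real.exp (-(c*w)) := by
    rw [he', Complex.norm_exp]
    congr 1
    simp [Complex.mul_re]
  have henorm : ‖e‖ = Real.exp (c*w) := by
    rw [he, Complex.norm_exp]
    congr 1
    simp [Complex.mul_re]
  have hexp0 : (0:ℝ) < Real.exp (-(c*w)) := Real.exp_pos _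
  -- row bounds
  obtain ⟨rr, hrr⟩ : ∃ f : Fin m ⊕ Fin m → ℝ, f = Sum.elim (fun _ => (1:ℝ)) (fun _ => 4*K*w) := ⟨_, rfl⟩
  obtain ⟨ss, hss⟩ : ∃ f : Fin m ⊕ Fin m → ℝ, f = fun _ => 4*K*w*Real.exp (-(c*w)) := ⟨_, rfl⟩
  have hss0 : ∀ i, (0:ℝ) ≤ ss i := fun i => by rw [hss]; exact h4Kwe0
  have hss1 : ∀ i, ss i ≤ 1 := fun i => by rw [hss]; exact hsmall
  have hPbnd : ∀ i j, ‖P i j‖ ≤ rr i := by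
    rintro (a | a) (b | b) <;>
      simp only [hPdef, hrr, Matrix.fromBlocks_apply₁₁, Matrix.fromBlocks_apply₁₂,
        Matrix.fromBlocks_apply₂₁, Matrix.fromBlocks_apply₂₂, Sum.elim_inl, Sum.elim_inr]
    · rw [Matrix.one_apply]; split <;> simp
    · simp
    · exact hbndN21 a b
    · exact hbndN22 a b
  have hEbnd : ∀ i j, ‖Em i j‖ ≤ ss i := by
    rintro (a | a) (b | b) <;>
      simp only [hEdef, hss, Matrix.fromBlocks_apply₁₁, Matrix.fromBlocks_apply₁₂,
        Matrix.fromBlocks_apply₂₁, Matrix.fromBlocks_apply₂₂, Matrix.smul_apply,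
        smul_eq_mul, norm_mul, he'norm]
    · calc Real.exp (-(c*w)) * ‖N11 a b‖ ≤ Real.exp (-(c*w)) * (4*K*w) := by
            exact mul_le_mul_of_nonneg_left (hbndN11 a b) (le_of_lt hexp0)
        _ = 4*K*w*Real.exp (-(c*w)) := by ring
    · calc Real.exp (-(c*w)) * ‖N12 a b‖ ≤ Real.exp (-(c*w)) * (4*K*w) := by
            exact mul_le_mul_of_nonneg_left (hbndN12 a b) (le_of_lt hexp0)
        _ = 4*K*w*Real.exp (-(c*w)) := by ring
    · simp only [Matrix.zero_apply, norm_zero]; exact h4Kwe0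
    · calc Real.exp (-(c*w)) * ‖(1 : Matrix (Fin m) (Fin m) ℂ) a b‖
          ≤ Real.exp (-(c*w)) * 1 := by
            refine mul_le_mul_of_nonneg_left ?_ (le_of_lt hexp0)
            rw [Matrix.one_apply]; split <;> simp
        _ ≤ 4*K*w*Real.exp (-(c*w)) := by nlinarith [Real.exp_pos (-(c*w))]
  -- subset bound
  obtain ⟨β, hβdef⟩ : ∃ b : ℝ, b = ((m+m).factorial : ℝ) * ((4*K*w)^m * (4*K*w*Real.exp (-(c*w)))) := ⟨_, rfl⟩
  have hβ0 : (0:ℝ) ≤ β := by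
    rw [hβdef]
    exact mul_nonneg (Nat.cast_nonneg _) (mul_nonneg (pow_nonneg h4Kw0 m) h4Kwe0)
  have hcard : Fintype.card (Fin m ⊕ Fin m) = m + m := by
    simp [Fintype.card_sum, Fintype.card_fin]
  have hβbnd : ∀ S : Finset (Fin m ⊕ Fin m), S.Nonempty →
      ((Fintype.card (Fin m ⊕ Fin m)).factorial : ℝ)
        * ∏ i, (if i ∈ S then ss i else rr i) ≤ β := by
    intro S hS
    rw [hcard, hβdef]
    refine mul_le_mul_of_nonneg_left ?_ (Nat.cast_nonneg _)
    have hpt : ∀ i, (if i ∈ S then ss i else rr i)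
        ≤ (if i ∈ S then (4*K*w*Real.exp (-(c*w))) else 1)
          * (Sum.elim (fun _ : Fin m => (1:ℝ)) (fun _ : Fin m => 4*K*w) i) := by
      rintro (a | a) <;> simp only [Sum.elim_inl, Sum.elim_inr] <;> split <;>
        simp only [hss, hrr, Sum.elim_inl, Sum.elim_inr, mul_one] <;> first
          | exact le_rfl
          | nlinarith [hexp0, hw0, hK1]
    calc ∏ i, (if i ∈ S then ss i else rr i)
        ≤ ∏ i, ((if i ∈ S then (4*K*w*Real.exp (-(c*w))) else 1)
            * (Sum.elim (fun _ : Fin m => (1:ℝ)) (fun _ : Fin m => 4*K*w) i)) := by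
          refine Finset.prod_le_prod (fun i _ => ?_) (fun i _ => hpt i)
          rcases i with a | a <;> simp only [hss, hrr, Sum.elim_inl, Sum.elim_inr] <;>
            split <;> first | exact h4Kwe0 | exact zero_le_one | exact h4Kw0
        
      _ = (∏ i, (if i ∈ S then (4*K*w*Real.exp (-(c*w))) else 1))
          * ∏ i, (Sum.elim (fun _ : Fin m => (1:ℝ)) (fun _ : Fin m => 4*K*w) i) :=
          Finset.prod_mul_distrib
      _ ≤ (4*K*w*Real.exp (-(c*w))) * (4*K*w)^m := by
          have h1 : (∏ i, (if i ∈ S then (4*K*w*Real.exp (-(c*w))) else 1))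
              = (4*K*w*Real.exp (-(c*w))) ^ S.card := by
            rw [Finset.prod_ite_mem, Finset.univ_inter, Finset.prod_const]
          have h2 : ∏ i, (Sum.elim (fun _ : Fin m => (1:ℝ)) (fun _ : Fin m => 4*K*w) i)
              = (4*K*w)^m := by
            rw [Fintype.prod_sum_type]
            simp
          rw [h1, h2]
          refine mul_le_mul_of_nonneg_right ?_ (pow_nonneg h4Kw0 m)
          calc (4*K*w*Real.exp (-(c*w))) ^ S.card ≤ (4*K*w*Real.exp (-(c*w))) ^ 1 :=
              pow_le_pow_of_le_one h4Kwe0 hsmall (Finset.one_le_card.2 hS)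
            _ = 4*K*w*Real.exp (-(c*w)) := pow_one _
      _ = (4*K*w)^m * (4*K*w*Real.exp (-(c*w))) := by ring
  have hkey := det_add_sub_det_le P Em rr ss hPbnd hEbnd β hβ0 hβbnd
  rw [hcard] at hkey
  -- assemble
  have hgoal1 : (Matrix.fromBlocks A B C D + Wm * Dg * Wm⁻¹).det
        - Complex.exp ((m:ℂ) * (c:ℂ) * (w:ℂ))
          * ((-((w:ℂ) / 2)) • B + ((1:ℂ) / 2) • (A + D) - (1 / (2 * (w:ℂ))) • C).det
      = e ^ m * ((P + Em).det - P.det) := by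
    rw [hdetbig, hdetfac, hS22, hfm, ← hdetP]
    ring
  rw [hgoal1]
  rw [norm_mul, norm_pow, henorm]
  have hexpm : Real.exp (c*w) ^ m * Real.exp (-(c*w)) = Real.exp (((m:ℝ) - 1)*c*w) := by
    rw [← Real.exp_nat_mul, ← Real.exp_add]
    congr 1
    push_cast
    ring
  have hrhs : ‖w ^ (m + 1) * Real.exp (((m:ℝ) - 1) * c * w)‖
      = w ^ (m+1) * Real.exp (((m:ℝ) - 1) * c * w) := by
    rw [Real.norm_eq_abs, abs_of_nonneg (by positivity)]
  rw [hrhs]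
  calc Real.exp (c*w) ^ m * ‖(P + Em).det - P.det‖
      ≤ Real.exp (c*w) ^ m * (2 ^ (m+m) * β) := by
        exact mul_le_mul_of_nonneg_left hkey (by positivity)
    _ = 2 ^ (m + m) * ((m + m).factorial : ℝ) * (4 * K) ^ (m + 1)
        * (w ^ (m+1) * Real.exp (((m:ℝ) - 1) * c * w)) := by
        rw [hβdef, ← hexpm]
        ring
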